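/- Let p be a prime, k an integer, and n ≥ 1, and let r be the size of the (k mod p^n)-monomial minimal solution of (E_{p^n}). Then: (i) the size of the (k mod p^{n+1})-monomial minimal solution of (E_{p^{n+1}}) equals r or p·r; (ii) if p is odd and r is even, then M_r(k, …, k) = −Id over Z/p^nZ; (iii) if p is odd and h denotes the size of the (k mod p)-monomial minimal solution of (E_p), then r ≡ h (mod 4) or r ≡ −h (mod 4); in particular r ≡ 2 (mod 4) if and only if h ≡ 2 (mod 4). -/
import Mathlib


open Matrix

/-- The elementary matrix `[[a, -1], [1, 0]]` over `ZMod N`. -/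
def genMat {N : ℕ} (a : ZMod N) : Matrix (Fin 2) (Fin 2) (ZMod N) :=
  !![a, -1; 1, 0]

/-- `Mword [a₁, …, aₙ]` is the matrix `Mₙ(a₁, …, aₙ) = genMat aₙ * ⋯ * genMat a₁`. -/
def Mword {N : ℕ} (l : List (ZMod N)) : Matrix (Fin 2) (Fin 2) (ZMod N) :=
  (l.reverse.map genMat).prod

/-- A tuple (encoded as a list) is a solution of `(E_N)` if its matrix is `±Id`. -/
def IsSolutionE {N : ℕ} (l : List (ZMod N)) : Prop :=
  Mword l = 1 ∨ Mword l = -1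

/-- The size of the `k`-monomial minimal solution of `(E_N)`: the least positive `n`
such that the constant `n`-tuple `(k, …, k)` is a solution of `(E_N)`. -/
noncomputable def monomialSize (N : ℕ) (k : ZMod N) : ℕ :=
  sInf {n : ℕ | 0 < n ∧ IsSolutionE (List.replicate n k)}

/-- The `k`-monomial minimal solution of `(E_N)`. -/
noncomputable def monoSol (N : ℕ) (k : ZMod N) : List (ZMod N) :=
  List.replicate (monomialSize N k) k

/-- The sum `⊕` of two tuples:
`(a₁,…,aₘ) ⊕ (b₁,…,bₗ) = (a₁+bₗ, a₂, …, aₘ₋₁, aₘ+b₁, b₂, …, bₗ₋₁)`. -/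
def oplus {N : ℕ} (a b : List (ZMod N)) : List (ZMod N) :=
  (a.headD 0 + b.getLastD 0) ::
    ((a.drop 1).dropLast ++ (a.getLastD 0 + b.headD 0) :: (b.drop 1).dropLast)

/-- Two tuples are equivalent (`∼`) if one is obtained from the other by a cyclic
permutation, possibly composed with order reversal. -/
def TupEquiv {N : ℕ} (c d : List (ZMod N)) : Prop :=
  (∃ i, d = c.rotate i) ∨ (∃ i, d = c.reverse.rotate i)

/-- A tuple is reducible if it is equivalent to a sum `a ⊕ b` where `b` is a solution of
`(E_N)` and both `a`, `b` have length at least `3`. -/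
def IsReducibleE {N : ℕ} (c : List (ZMod N)) : Prop :=
  ∃ a b : List (ZMod N), 3 ≤ a.length ∧ 3 ≤ b.length ∧ IsSolutionE b ∧
    TupEquiv c (oplus a b)

/-- An irreducible solution of `(E_N)`: a solution of size at least `3` that is not
reducible (the solution `(0,0)` is not considered irreducible). -/
def IsIrreducibleE {N : ℕ} (c : List (ZMod N)) : Prop :=
  IsSolutionE c ∧ 3 ≤ c.length ∧ ¬ IsReducibleE c

/-- A reducible solution of `(E_N)`: a solution that is not irreducible. -/
def IsReducibleSol {N : ℕ} (c : List (ZMod N)) : Prop :=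
  IsSolutionE c ∧ ¬ IsIrreducibleE c

/-- `N` is monomially irreducible if for every nonzero `k ∈ ZMod N` the `k`-monomial
minimal solution of `(E_N)` is irreducible. -/
def MonomiallyIrreducible (N : ℕ) : Prop :=
  ∀ k : ZMod N, k ≠ 0 → IsIrreducibleE (monoSol N k)

/-- `N` is quasi monomially irreducible if for every integer `k` coprime to `N` the
`(k mod N)`-monomial minimal solution of `(E_N)` is irreducible. -/
def QuasiMonomiallyIrreducible (N : ℕ) : Prop :=
  ∀ k : ℤ, Int.gcd k (N : ℤ) = 1 → IsIrreducibleE (monoSol N (k : ZMod N))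

/-- `N` is semi monomially irreducible: if `N` is even but not divisible by `4`, this
requires that for every integer `a` coprime to `N/2` the `(2a mod N)`-monomial minimal
solution of `(E_N)` is irreducible; otherwise (i.e. `N` odd or divisible by `4`), it
requires the same for every integer `a` coprime to `N`. -/
def SemiMonomiallyIrreducible (N : ℕ) : Prop :=
  if 2 ∣ N ∧ ¬ (4 ∣ N) then
    ∀ a : ℤ, Int.gcd a ((N / 2 : ℕ) : ℤ) = 1 →
      IsIrreducibleE (monoSol N ((2 * a : ℤ) : ZMod N))
  else
    ∀ a : ℤ, Int.gcd a (N : ℤ) = 1 →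
      IsIrreducibleE (monoSol N ((2 * a : ℤ) : ZMod N))

lemma mword_replicate {N : ℕ} (m : ℕ) (a : ZMod N) :
    Mword (List.replicate m a) = (genMat a)^m := by
  simp [Mword, List.reverse_replicate, List.map_replicate, List.prod_replicate]
lemma exists_pow_eq_one {N : ℕ} [NeZero N] (a : ZMod N) :
    ∃ m, 0 < m ∧ (genMat a)^m = 1 := by
  have hu : IsUnit (genMat a) := by
    rw [Matrix.isUnit_iff_isUnit_det]
    simp [genMat, Matrix.det_fin_two_of]
  obtain ⟨u, hu⟩ := hu
  refine ⟨orderOf u, orderOf_pos u, ?_⟩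
  rw [← hu, ← Units.val_pow_eq_pow_val, pow_orderOf_eq_one, Units.val_one]

lemma size_spec {N : ℕ} [NeZero N] (a : ZMod N) :
    0 < monomialSize N a ∧
      ((genMat a)^(monomialSize N a) = 1 ∨ (genMat a)^(monomialSize N a) = -1) := by
  obtain ⟨m, hm, hm1⟩ := exists_pow_eq_one a
  have hmem : monomialSize N a ∈ {n : ℕ | 0 < n ∧ IsSolutionE (List.replicate n a)} :=
    Nat.sInf_mem ⟨m, hm, Or.inl (by rw [mword_replicate]; exact hm1)⟩
  simpa [IsSolutionE, mword_replicate] using hmem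

lemma size_dvd {N : ℕ} [NeZero N] (a : ZMod N) {m : ℕ} (hm : 0 < m)
    (h : (genMat a)^m = 1 ∨ (genMat a)^m = -1) : monomialSize N a ∣ m := by
  obtain ⟨hrpos, hrspec⟩ := size_spec a
  set r := monomialSize N a with hrdef
  set A := genMat a
  have hm' : A ^ m = (A ^ r) ^ (m / r) * A ^ (m % r) := by
    rw [← pow_mul, ← pow_add, Nat.div_add_mod]
  have hsq : (A ^ r) ^ 2 = 1 := by
    rcases hrspec with h1 | h1 <;> simp [h1]
  have hdecomp : A ^ (m % r) = (A ^ r) ^ (m / r) * A ^ m := by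
    rw [hm', ← mul_assoc, ← pow_add, ← two_mul, pow_mul, hsq, one_pow, one_mul]
  have hs : A ^ (m % r) = 1 ∨ A ^ (m % r) = -1 := by
    rw [hdecomp]
    rcases hrspec with h1 | h1 <;> rcases h with h2 | h2 <;>
      rcases Nat.even_or_odd (m / r) with he | he <;>
        simp [h1, h2, he.neg_one_pow, mul_neg, neg_mul]
  by_contra hnd
  have hpos : 0 < m % r := Nat.pos_of_ne_zero fun h0 => hnd (Nat.dvd_of_mod_eq_zero h0)
  have hlt : m % r < r := Nat.mod_lt _ hrpos
  have : r ≤ m % r := Nat.sInf_le ⟨hpos, Or.imp (fun h' => by rw [mword_replicate]; exact h')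
    (fun h' => by rw [mword_replicate]; exact h') hs⟩
  omega

lemma ker_mul (p n : ℕ) (hp : p.Prime) (hn : 1 ≤ n)
    (x y : ZMod (p^(n+1)))
    (hx : ZMod.castHom (pow_dvd_pow p n.le_succ) (ZMod (p^n)) x = 0)
    (hy : ZMod.castHom (pow_dvd_pow p n.le_succ) (ZMod (p^n)) y = 0) :
    x * y = 0 := by
  haveI : NeZero (p ^ (n+1)) := ⟨pow_ne_zero _ hp.pos.ne'⟩
  haveI : NeZero (p ^ n) := ⟨pow_ne_zero _ hp.pos.ne'⟩
  have hx' : (p : ℕ)^n ∣ x.val := by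
    rwa [ZMod.castHom_apply, ZMod.cast_eq_val, ZMod.natCast_eq_zero_iff] at hx
  have hy' : (p : ℕ)^n ∣ y.val := by
    rwa [ZMod.castHom_apply, ZMod.cast_eq_val, ZMod.natCast_eq_zero_iff] at hy
  have hxv : (x.val : ZMod (p^(n+1))) = x := ZMod.natCast_rightInverse x
  have hyv : (y.val : ZMod (p^(n+1))) = y := ZMod.natCast_rightInverse y
  have hd : (p:ℕ)^(n+1) ∣ x.val * y.val := by
    obtain ⟨a, ha⟩ := hx'; obtain ⟨b, hb⟩ := hy'
    refine ⟨p^(n-1) * a * b, ?_⟩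
    have h2 : (p:ℕ)^n * (p:ℕ)^n = p^(n+1) * p^(n-1) := by
      rw [← pow_add, ← pow_add]; congr 1; omega
    calc x.val * y.val = p^n * a * (p^n * b) := by rw [ha, hb]
      _ = (p^n * p^n) * (a * b) := by ring
      _ = p^(n+1) * (p^(n-1) * a * b) := by rw [h2]; ring
  rw [← hxv, ← hyv, ← Nat.cast_mul, ZMod.natCast_eq_zero_iff]
  exact hd

lemma ker_psmul (p n : ℕ) (hp : p.Prime)
    (x : ZMod (p^(n+1)))
    (hx : ZMod.castHom (pow_dvd_pow p n.le_succ) (ZMod (p^n)) x = 0) :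
    (p : ZMod (p^(n+1))) * x = 0 := by
  haveI : NeZero (p ^ (n+1)) := ⟨pow_ne_zero _ hp.pos.ne'⟩
  haveI : NeZero (p ^ n) := ⟨pow_ne_zero _ hp.pos.ne'⟩
  have hx' : (p : ℕ)^n ∣ x.val := by
    rwa [ZMod.castHom_apply, ZMod.cast_eq_val, ZMod.natCast_eq_zero_iff] at hx
  have hxv : (x.val : ZMod (p^(n+1))) = x := ZMod.natCast_rightInverse x
  obtain ⟨a, ha⟩ := hx'
  rw [← hxv, ← Nat.cast_mul, ZMod.natCast_eq_zero_iff]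
  exact ⟨a, by rw [ha, pow_succ]; ring⟩

lemma one_add_pow {R : Type*} [Ring R] (C : R) (hC : C * C = 0) (m : ℕ) :
    (1 + C)^m = 1 + m • C := by
  induction m with
  | zero => simp
  | succ m ih =>
    rw [pow_succ, ih, add_smul, one_smul]
    have h1 : (m • C) * C = m • (C * C) := smul_mul_assoc m C C
    rw [mul_add, mul_one, add_mul, one_mul, h1, hC, smul_zero, add_zero, add_assoc]

lemma genMat_map {N M : ℕ} (f : ZMod N →+* ZMod M) (a : ZMod N) :
    f.mapMatrix (genMat a) = genMat (f a) := by
  ext i j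
  fin_cases i <;> fin_cases j <;>
    simp [genMat, RingHom.mapMatrix_apply, Matrix.map_apply]

lemma lift_step (p n : ℕ) (hp : p.Prime) (hn : 1 ≤ n) (k : ℤ) :
    monomialSize (p^(n+1)) ((k : ℤ) : ZMod (p^(n+1))) = monomialSize (p^n) ((k : ℤ) : ZMod (p^n)) ∨
    monomialSize (p^(n+1)) ((k : ℤ) : ZMod (p^(n+1))) = p * monomialSize (p^n) ((k : ℤ) : ZMod (p^n)) := by
  haveI : NeZero (p ^ (n+1)) := ⟨pow_ne_zero _ hp.pos.ne'⟩
  haveI : NeZero (p ^ n) := ⟨pow_ne_zero _ hp.pos.ne'⟩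
  set f := ZMod.castHom (pow_dvd_pow p n.le_succ) (ZMod (p^n)) with hf
  set F := RingHom.mapMatrix (m := Fin 2) f with hF
  set a' : ZMod (p^(n+1)) := ((k : ℤ) : ZMod (p^(n+1)))
  set a : ZMod (p^n) := ((k : ℤ) : ZMod (p^n))
  have hFA : F (genMat a') = genMat a := by
    rw [hF, genMat_map]
    show genMat (f ((k : ℤ) : ZMod (p^(n+1)))) = _
    rw [map_intCast]
  set r' := monomialSize (p^(n+1)) a' with hr'
  set r := monomialSize (p^n) a with hrr
  obtain ⟨hr'pos, hr'spec⟩ := size_spec a'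
  obtain ⟨hrpos, hrspec⟩ := size_spec a
  -- r ∣ r'
  have h1 : r ∣ r' := by
    apply size_dvd a hr'pos
    rcases hr'spec with h | h
    · left; rw [← hFA, ← map_pow, h]; simp
    · right; rw [← hFA, ← map_pow, h, map_neg]; simp
  -- r' ∣ p * r
  have key : ∀ C : Matrix (Fin 2) (Fin 2) (ZMod (p^(n+1))), F C = 0 → (1 + C)^p = 1 := by
    intro C hFC
    have hent : ∀ i j, f (C i j) = 0 := by
      intro i j
      have := congrFun (congrFun hFC i) j
      simpa [hF, RingHom.mapMatrix_apply, Matrix.map_apply] using this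
    have hCC : C * C = 0 := by
      ext i j
      rw [Matrix.mul_apply]
      refine Finset.sum_eq_zero fun x _ => ker_mul p n hp hn _ _ (hent i x) (hent x j)
    have hpC : p • C = 0 := by
      ext i j
      have : (p : ZMod (p^(n+1))) * C i j = 0 := ker_psmul p n hp _ (hent i j)
      simpa [Matrix.smul_apply, nsmul_eq_mul] using this
    rw [one_add_pow C hCC, hpC, add_zero]
  have h2 : r' ∣ p * r := by
    apply size_dvd a' (Nat.mul_pos hp.pos hrpos)
    rw [pow_mul']
    rcases hrspec with h | h
    · left
      have hFC : F (genMat a' ^ r - 1) = 0 := by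
        rw [map_sub, map_pow, hFA, h]; simp
      have := key _ hFC
      rwa [add_sub_cancel] at this
    · have hFC : F (-(genMat a' ^ r) - 1) = 0 := by
        rw [map_sub, map_neg, map_pow, hFA, h]; simp
      have hkey := key _ hFC
      rw [add_sub_cancel] at hkey
      have hX : (genMat a' ^ r) ^ p = (-1) ^ p := by
        rw [← neg_neg (genMat a' ^ r), neg_pow, hkey, mul_one]
      rcases Nat.even_or_odd p with he | he
      · left; rw [hX, he.neg_one_pow]
      · right; rw [hX, he.neg_one_pow]
  obtain ⟨d, hd⟩ := h1
  have hdp : d ∣ p := by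
    have : r * d ∣ r * p := by rw [← hd]; rwa [mul_comm p r] at h2
    exact (mul_dvd_mul_iff_left hrpos.ne').mp this
  rcases (Nat.Prime.eq_one_or_self_of_dvd hp d hdp) with h | h
  · left; rw [hd, h, mul_one]
  · right; rw [hd, h, mul_comm]

-- square roots of 4 mod p^n, p odd prime
lemma sqrt_four (p n : ℕ) (hp : p.Prime) (hodd : Odd p) [NeZero (p^n)]
    (t : ZMod (p^n)) (ht : t * t = 4) : t = 2 ∨ t = -2 := by
  have hp2 : p ≠ 2 := by rintro rfl; revert hodd; simp
  have hint : ((p:ℤ)^n) ∣ (t.val - 2) * (t.val + 2) := by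
    have h4 : ((t.val : ZMod (p^n)) : ZMod (p^n)) = t := ZMod.natCast_rightInverse t
    have : (((t.val : ℤ) * t.val - 4 : ℤ) : ZMod (p^n)) = 0 := by
      push_cast
      rw [h4, ht]; ring
    rw [ZMod.intCast_zmod_eq_zero_iff_dvd] at this
    have heq : ((t.val : ℤ) * t.val - 4) = (t.val - 2) * (t.val + 2) := by ring
    rw [heq] at this
    exact_mod_cast this
  have hcases : ((p:ℤ)^n) ∣ (t.val - 2) ∨ ((p:ℤ)^n) ∣ (t.val + 2) := by
    by_cases hdvd : (p:ℤ) ∣ (t.val + 2)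
    · by_cases hdvd2 : (p:ℤ) ∣ (t.val - 2)
      · exfalso
        have : (p:ℤ) ∣ 4 := by
          have := dvd_sub hdvd hdvd2
          simpa using this
        have h4' : (p:ℕ) ∣ 4 := by exact_mod_cast this
        have := (Nat.prime_dvd_prime_iff_eq hp (by norm_num)).mp
          (hp.dvd_of_dvd_pow (show p ∣ 2^2 by norm_num [h4']))
        exact hp2 this
      · -- p ∤ t.val - 2, so coprime to p^n, so p^n ∣ t.val + 2
        right
        have hcop : IsCoprime ((p:ℤ)^n) ((t.val:ℤ) - 2) :=
          IsCoprime.pow_left (((Int.prime_iff_natAbs_prime.mpr (by simpa using hp)).coprime_iff_not_dvd.mpr) hdvd2)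
        exact hcop.dvd_of_dvd_mul_left hint
    · left
      have hcop : IsCoprime ((p:ℤ)^n) ((t.val:ℤ) + 2) :=
        IsCoprime.pow_left (((Int.prime_iff_natAbs_prime.mpr (by simpa using hp)).coprime_iff_not_dvd.mpr) hdvd)
      exact hcop.dvd_of_dvd_mul_right hint
  have h4 : ((t.val : ZMod (p^n))) = t := ZMod.natCast_rightInverse t
  rcases hcases with h | h
  · left
    have : (((t.val : ℤ) - 2 : ℤ) : ZMod (p^n)) = 0 := by
      rw [ZMod.intCast_zmod_eq_zero_iff_dvd]; exact_mod_cast h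
    push_cast at this
    rw [h4] at this
    linear_combination this
  · right
    have : (((t.val : ℤ) + 2 : ℤ) : ZMod (p^n)) = 0 := by
      rw [ZMod.intCast_zmod_eq_zero_iff_dvd]; exact_mod_cast h
    push_cast at this
    rw [h4] at this
    linear_combination this

lemma two_unit (p n : ℕ) (hp : p.Prime) (hodd : Odd p) [NeZero (p^n)] :
    IsUnit (2 : ZMod (p^n)) := by
  have : IsUnit ((2:ℕ) : ZMod (p^n)) := by
    rw [ZMod.isUnit_iff_coprime]
    exact Nat.Coprime.pow_right _ (Nat.coprime_two_left.mpr hodd)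
  simpa using this

lemma size_even_neg_one (p n : ℕ) (hp : p.Prime) (hodd : Odd p) [NeZero (p^n)]
    (a : ZMod (p^n)) (he : Even (monomialSize (p^n) a)) :
    genMat a ^ (monomialSize (p^n) a) = -1 := by
  obtain ⟨hrpos, hrspec⟩ := size_spec a
  rcases hrspec with h1 | h1
  swap
  · exact h1
  exfalso
  set r := monomialSize (p^n) a with hr
  obtain ⟨s, hs⟩ := he
  have hspos : 0 < s := by omega
  set B := genMat a ^ s with hB
  have hBB : B * B = 1 := by rw [hB, ← pow_add, ← hs]; exact h1
  have e00 := congrFun (congrFun hBB 0) 0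
  have e01 := congrFun (congrFun hBB 0) 1
  have e10 := congrFun (congrFun hBB 1) 0
  have e11 := congrFun (congrFun hBB 1) 1
  simp [Matrix.mul_apply, Fin.sum_univ_two, Matrix.one_apply] at e00 e01 e10 e11
  have hdet : B 0 0 * B 1 1 - B 0 1 * B 1 0 = 1 := by
    have hd : B.det = 1 := by
      rw [hB, Matrix.det_pow]
      simp [genMat, Matrix.det_fin_two_of]
    rwa [Matrix.det_fin_two] at hd
  have hat : B 0 0 * (B 0 0 + B 1 1) = 2 := by linear_combination e00 + hdet
  have hdt : B 1 1 * (B 0 0 + B 1 1) = 2 := by linear_combination e11 + hdet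
  have htt : (B 0 0 + B 1 1) * (B 0 0 + B 1 1) = 4 := by linear_combination hat + hdt
  have h2u := two_unit p n hp hodd
  have hBval : B = 1 ∨ B = -1 := by
    rcases sqrt_four p n hp hodd _ htt with ht | ht
    · left
      have hb : B 0 1 = 0 := by
        refine h2u.mul_left_cancel ?_
        linear_combination e01 - B 0 1 * ht
      have hc : B 1 0 = 0 := by
        refine h2u.mul_left_cancel ?_
        linear_combination e10 - B 1 0 * ht
      have ha : B 0 0 = 1 := by
        refine h2u.mul_left_cancel ?_
        linear_combination hat - B 0 0 * ht
      have hd : B 1 1 = 1 := by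
        refine h2u.mul_left_cancel ?_
        linear_combination hdt - B 1 1 * ht
      rw [Matrix.eta_fin_two B, ha, hb, hc, hd, Matrix.one_fin_two]
    · right
      have hb : B 0 1 = 0 := by
        refine (h2u.neg).mul_left_cancel ?_
        linear_combination e01 - B 0 1 * ht
      have hc : B 1 0 = 0 := by
        refine (h2u.neg).mul_left_cancel ?_
        linear_combination e10 - B 1 0 * ht
      have ha : B 0 0 = -1 := by
        refine (h2u.neg).mul_left_cancel ?_
        linear_combination hat - B 0 0 * ht
      have hd : B 1 1 = -1 := by
        refine (h2u.neg).mul_left_cancel ?_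
        linear_combination hdt - B 1 1 * ht
      have hneg : (-1 : Matrix (Fin 2) (Fin 2) (ZMod (p^n))) = !![-1, 0; 0, -1] := by
        ext i j
        fin_cases i <;> fin_cases j <;> simp
      rw [Matrix.eta_fin_two B, ha, hb, hc, hd, hneg]
  have hmem : s ∈ {m : ℕ | 0 < m ∧ IsSolutionE (List.replicate m a)} := by
    refine ⟨hspos, ?_⟩
    rw [IsSolutionE, mword_replicate, ← hB]
    exact hBval
  have : r ≤ s := Nat.sInf_le hmem
  omega

lemma size_eq_pow_mul (p : ℕ) (hp : p.Prime) (k : ℤ) :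
    ∀ n : ℕ, 1 ≤ n →
    ∃ j, monomialSize (p^n) ((k:ℤ) : ZMod (p^n)) = p^j * monomialSize p ((k:ℤ) : ZMod p) := by
  intro n
  induction n with
  | zero => omega
  | succ n ih =>
    intro _
    by_cases hn0 : n = 0
    · subst hn0
      refine ⟨0, ?_⟩
      rw [pow_zero, one_mul]
      exact congrArg (fun N => monomialSize N ((k:ℤ) : ZMod N)) (pow_one p)
    · obtain ⟨j, hj⟩ := ih (by omega)
      rcases lift_step p n hp (by omega) k with h | h
      · exact ⟨j, by rw [h, hj]⟩
      · exact ⟨j + 1, by rw [h, hj, pow_succ]; ring⟩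


/-- for `p` prime, `k ∈ ℤ`, `n ≥ 1` and `r` the size of the
`(k mod p^n)`-monomial minimal solution of `(E_{p^n})`:
(i) the size of the `(k mod p^(n+1))`-monomial minimal solution of `(E_{p^(n+1)})` is
`r` or `p·r`; (ii) if `p` is odd and `r` is even then `M_r(k, …, k) = -Id` over
`ZMod (p^n)`; (iii) if `p` is odd and `h` is the size of the `(k mod p)`-monomial
minimal solution of `(E_p)`, then `r ≡ ±h (mod 4)`, and `r ≡ 2 (mod 4)` iff
`h ≡ 2 (mod 4)`. -/
theorem stmt_18 (p : ℕ) (hp : p.Prime) (k : ℤ) (n : ℕ) (hn : 1 ≤ n)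
    (r : ℕ) (hr : r = monomialSize (p ^ n) (k : ZMod (p ^ n))) :
    (monomialSize (p ^ (n + 1)) (k : ZMod (p ^ (n + 1))) = r ∨
      monomialSize (p ^ (n + 1)) (k : ZMod (p ^ (n + 1))) = p * r) ∧
    (Odd p → Even r → Mword (List.replicate r (k : ZMod (p ^ n))) = -1) ∧
    (Odd p → ∀ h : ℕ, h = monomialSize p (k : ZMod p) →
      (((r : ℤ) ≡ (h : ℤ) [ZMOD 4]) ∨ ((r : ℤ) ≡ -(h : ℤ) [ZMOD 4])) ∧
      (r % 4 = 2 ↔ h % 4 = 2)) := by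
  haveI : NeZero (p ^ n) := ⟨pow_ne_zero _ hp.pos.ne'⟩
  refine ⟨?_, ?_, ?_⟩
  · rcases lift_step p n hp hn k with h | h
    · left; rw [h, ← hr]
    · right; rw [h, ← hr]
  · intro hodd hev
    rw [mword_replicate, hr]
    exact size_even_neg_one p n hp hodd _ (hr ▸ hev)
  · intro hodd h hh
    obtain ⟨j, hj⟩ := size_eq_pow_mul p hp k n hn
    have hrh : r = p ^ j * h := by rw [hr, hj, hh]
    have hpj : ((p : ℤ) ^ j ≡ 1 [ZMOD 4]) ∨ ((p : ℤ) ^ j ≡ -1 [ZMOD 4]) := by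
      have hp2 : p % 2 = 1 := Nat.odd_iff.mp hodd
      have hp4 : p % 4 = 1 ∨ p % 4 = 3 := by omega
      rcases hp4 with h4 | h4
      · left
        have : (p : ℤ) ≡ 1 [ZMOD 4] := by
          show (p : ℤ) % 4 = 1 % 4
          omega
        simpa using this.pow j
      · have : (p : ℤ) ≡ -1 [ZMOD 4] := by
          show (p : ℤ) % 4 = (-1) % 4
          omega
        have hpow := this.pow j
        rcases Nat.even_or_odd j with he | he
        · left; rwa [he.neg_one_pow] at hpow
        · right; rwa [he.neg_one_pow] at hpow
    have hmod : ((r : ℤ) ≡ (h : ℤ) [ZMOD 4]) ∨ ((r : ℤ) ≡ -(h : ℤ) [ZMOD 4]) := by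
      have hcast : (r : ℤ) = (p : ℤ) ^ j * h := by rw [hrh]; push_cast; ring
      rcases hpj with hpj | hpj
      · left
        calc (r : ℤ) = (p:ℤ)^j * h := hcast
          _ ≡ 1 * h [ZMOD 4] := hpj.mul_right _
          _ = (h : ℤ) := one_mul _
      · right
        calc (r : ℤ) = (p:ℤ)^j * h := hcast
          _ ≡ (-1) * h [ZMOD 4] := hpj.mul_right _
          _ = -(h : ℤ) := by ring
    refine ⟨hmod, ?_⟩
    rcases hmod with hm | hm <;> (change _ % _ = _ % _ at hm) <;> omega
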